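/- Let γ > 0, δ ≥ 0, p ∈ [0,1] and q0 ≥ 0. On a probability space let (Q^r_k)_{k≥1}, (Q̂^r_k)_{k≥1}, (Ŝ_k)_{k≥1}, (X_k)_{k≥1} be stochastic processes with Q^r_k ≥ 0, Ŝ_k ∈ {0,1} and X_k ∈ {0,1}, such that almost surely for every k ≥ 1: Q^r_1 = q0, Q^r_{k+1} ≤ max(0, Q^r_k + Ŝ_k − (1 − X_k)), |Q̂^r_k − Q^r_k| ≤ δ, and (Q̂^r_k − γ)·Ŝ_k ≤ 0. Suppose moreover that for every k, X_k has mean p and is independent of Q^r_k, and that E[Q^r_k] ≥ γ − 1 − δ. Then liminf_{k→∞} E[(1/k)·∑_{i=1}^k Ŝ_i] ≥ (1 − p) − (1/2 + δ + (1 + δ)·(1 − p))/γ. -/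

import Mathlib

open MeasureTheory ProbabilityTheory Filter

private lemma sq_le_of_le_max {a z : ℝ} (h0 : 0 ≤ a) (h1 : a ≤ max 0 z) : a ^ 2 ≤ z ^ 2 := by
  have h2 : a ≤ |z| := h1.trans (max_le (abs_nonneg z) (le_abs_self z))
  nlinarith [abs_nonneg z, sq_abs z]

set_option maxHeartbeats 1000000 in
/-- Capacity loss bound for the threshold-`γ` policy with prediction errors of
size at most `δ`: the expected long-run fraction of slots available for
information packets satisfies
`liminf_k E[(1/k)·∑_{i=1}^k Ŝ_i] ≥ (1 − p) − (1/2 + δ + (1 + δ)(1 − p))/γ`. -/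
theorem stmt_13 {Ω : Type*} [MeasurableSpace Ω] (μ : Measure Ω) [IsProbabilityMeasure μ]
    (γ δ p q0 : ℝ) (hγ : 0 < γ) (hδ : 0 ≤ δ) (hp0 : 0 ≤ p) (hp1 : p ≤ 1) (hq0 : 0 ≤ q0)
    (Qr Qhat Shat X : ℕ → Ω → ℝ)
    (hQnn : ∀ k ω, 0 ≤ Qr k ω)
    (hShat : ∀ k ω, Shat k ω = 0 ∨ Shat k ω = 1)
    (hXv : ∀ k ω, X k ω = 0 ∨ X k ω = 1)
    (hmeasS : ∀ k, Measurable (Shat k))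
    (hmeasX : ∀ k, Measurable (X k))
    (hmeasQ : ∀ k, Measurable (Qr k))
    (has : ∀ᵐ ω ∂μ, Qr 1 ω = q0 ∧ ∀ k ≥ 1,
      Qr (k + 1) ω ≤ max 0 (Qr k ω + Shat k ω - (1 - X k ω)) ∧
      |Qhat k ω - Qr k ω| ≤ δ ∧ (Qhat k ω - γ) * Shat k ω ≤ 0)
    (hXmean : ∀ k, ∫ ω, X k ω ∂μ = p)
    (hXindep : ∀ k, IndepFun (X k) (Qr k) μ)
    (hEQ : ∀ k, γ - 1 - δ ≤ ∫ ω, Qr k ω ∂μ) :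
    (1 - p) - (1 / 2 + δ + (1 + δ) * (1 - p)) / γ ≤
      Filter.liminf
        (fun k : ℕ => ∫ ω, (1 / (k : ℝ)) * ∑ i ∈ Finset.Icc 1 k, Shat i ω ∂μ)
        Filter.atTop := by
  have hγ' : γ ≠ 0 := ne_of_gt hγ
  have hCB : (1 - p) - (1 / 2 + δ + (1 + δ) * (1 - p)) / γ
      = -(2 * δ + 1 - 2 * (1 - p) * (γ - 1 - δ)) / (2 * γ) := by
    field_simp; ring
  -- basic bounds on values of Shat and X
  have hSv : ∀ k ω, 0 ≤ Shat k ω ∧ Shat k ω ≤ 1 := by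
    intro k ω; rcases hShat k ω with h | h <;> rw [h] <;> norm_num
  have hXb : ∀ k ω, 0 ≤ X k ω ∧ X k ω ≤ 1 := by
    intro k ω; rcases hXv k ω with h | h <;> rw [h] <;> norm_num
  -- a.e. linear bound on Qr
  have hQb : ∀ᵐ ω ∂μ, ∀ k, 1 ≤ k → Qr k ω ≤ q0 + k := by
    filter_upwards [has] with ω hω
    obtain ⟨h1, hrec⟩ := hω
    intro k hk
    induction k, hk using Nat.le_induction with
    | base => rw [h1]; push_cast; linarith
    | succ k hk ih =>
      obtain ⟨h2, -, -⟩ := hrec k hk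
      have hS := hSv k ω; have hX := hXb k ω
      have hmax : max 0 (Qr k ω + Shat k ω - (1 - X k ω)) ≤ Qr k ω + 1 := by
        apply max_le
        · nlinarith [hQnn k ω, hS.1, hX.1]
        · linarith [hS.2, hX.2]
      push_cast
      push_cast at ih
      linarith [h2.trans hmax]
  -- integrability
  have intS : ∀ k, Integrable (Shat k) μ := by
    intro k
    refine (integrable_const (1 : ℝ)).mono' (hmeasS k).aestronglyMeasurable ?_
    refine Eventually.of_forall fun ω => ?_
    rw [Real.norm_eq_abs, abs_of_nonneg (hSv k ω).1]; exact (hSv k ω).2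
  have intX : ∀ k, Integrable (X k) μ := by
    intro k
    refine (integrable_const (1 : ℝ)).mono' (hmeasX k).aestronglyMeasurable ?_
    refine Eventually.of_forall fun ω => ?_
    rw [Real.norm_eq_abs, abs_of_nonneg (hXb k ω).1]; exact (hXb k ω).2
  have intQ : ∀ k, 1 ≤ k → Integrable (Qr k) μ := by
    intro k hk
    refine (integrable_const (q0 + (k : ℝ))).mono' (hmeasQ k).aestronglyMeasurable ?_
    filter_upwards [hQb] with ω hω
    rw [Real.norm_eq_abs, abs_of_nonneg (hQnn k ω)]
    exact hω k hk
  have intQ2 : ∀ k, 1 ≤ k → Integrable (fun ω => Qr k ω ^ 2) μ := by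
    intro k hk
    refine (integrable_const ((q0 + (k : ℝ)) ^ 2)).mono'
      ((hmeasQ k).pow_const 2).aestronglyMeasurable ?_
    filter_upwards [hQb] with ω hω
    rw [Real.norm_eq_abs, abs_of_nonneg (by positivity)]
    nlinarith [hQnn k ω, hω k hk]
  have intQX : ∀ k, 1 ≤ k → Integrable (fun ω => Qr k ω * (1 - X k ω)) μ := by
    intro k hk
    refine (integrable_const (q0 + (k : ℝ))).mono'
      ((hmeasQ k).mul (measurable_const.sub (hmeasX k))).aestronglyMeasurable ?_
    filter_upwards [hQb] with ω hω
    have h1 := hXb k ω; have h2 := hQnn k ω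
    rw [Real.norm_eq_abs, abs_of_nonneg (by nlinarith [h1.1, h1.2])]
    nlinarith [hω k hk, h1.1, h1.2]
  -- drift inequality in expectation
  have drift : ∀ k, 1 ≤ k →
      ∫ ω, Qr (k + 1) ω ^ 2 ∂μ ≤ ∫ ω, Qr k ω ^ 2 ∂μ + 2 * γ * (∫ ω, Shat k ω ∂μ)
        + (2 * δ + 1 - 2 * (1 - p) * (γ - 1 - δ)) := by
    intro k hk
    have hptw : ∀ᵐ ω ∂μ, Qr (k + 1) ω ^ 2 ≤
        Qr k ω ^ 2 + 2 * γ * Shat k ω + 2 * δ + 1 - 2 * (Qr k ω * (1 - X k ω)) := by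
      filter_upwards [has] with ω hω
      obtain ⟨-, hrec⟩ := hω
      obtain ⟨hQ', habs, hthr⟩ := hrec k hk
      have hkey := sq_le_of_le_max (hQnn (k + 1) ω) hQ'
      have hQle : Qr k ω ≤ Qhat k ω + δ := by
        have := abs_le.mp habs; linarith [this.1]
      rcases hShat k ω with hS | hS <;> rcases hXv k ω with hX | hX <;>
        rw [hS, hX] at hkey ⊢ <;> rw [hS] at hthr <;>
        nlinarith [hQnn k ω, hkey, hthr, hQle, hδ, hγ]
    have iR : Integrable (fun ω =>
        Qr k ω ^ 2 + 2 * γ * Shat k ω + 2 * δ + 1 - 2 * (Qr k ω * (1 - X k ω))) μ :=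
      ((((intQ2 k hk).add ((intS k).const_mul (2 * γ))).add (integrable_const (2 * δ))).add
        (integrable_const 1)).sub ((intQX k hk).const_mul 2)
    have hmono := integral_mono_ae (intQ2 (k + 1) (by omega)) iR hptw
    have i1 : Integrable (fun ω => 2 * γ * Shat k ω) μ := (intS k).const_mul _
    have i2 : Integrable (fun ω => Qr k ω ^ 2 + 2 * γ * Shat k ω) μ := (intQ2 k hk).add i1
    have i3 : Integrable (fun ω => Qr k ω ^ 2 + 2 * γ * Shat k ω + 2 * δ) μ := i2.add (integrable_const _)
    have i4 : Integrable (fun ω => Qr k ω ^ 2 + 2 * γ * Shat k ω + 2 * δ + 1) μ := i3.add (integrable_const _)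
    have i5 : Integrable (fun ω => 2 * (Qr k ω * (1 - X k ω))) μ := (intQX k hk).const_mul _
    have hsplit : ∫ ω, (Qr k ω ^ 2 + 2 * γ * Shat k ω + 2 * δ + 1
        - 2 * (Qr k ω * (1 - X k ω))) ∂μ
        = (∫ ω, Qr k ω ^ 2 ∂μ) + 2 * γ * (∫ ω, Shat k ω ∂μ) + 2 * δ + 1
          - 2 * ∫ ω, Qr k ω * (1 - X k ω) ∂μ := by
      rw [integral_sub i4 i5, integral_add i3 (integrable_const 1),
          integral_add i2 (integrable_const (2 * δ)), integral_add (intQ2 k hk) i1,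
          integral_const_mul, integral_const_mul, integral_const, integral_const]
      simp [integral_const_mul]
    have hqx : ∫ ω, Qr k ω * (1 - X k ω) ∂μ = (1 - p) * ∫ ω, Qr k ω ∂μ := by
      have hsub : (fun ω => Qr k ω * (1 - X k ω)) = fun ω => Qr k ω - X k ω * Qr k ω := by
        funext ω; ring
      rw [hsub]
      have hXQ : Integrable (fun ω => X k ω * Qr k ω) μ := by
        have := ((intQ k hk).bdd_mul (c := 1) (hmeasX k).aestronglyMeasurable
          (Eventually.of_forall fun ω => by rw [Real.norm_eq_abs, abs_of_nonneg (hXb k ω).1]; exact (hXb k ω).2))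
        exact this
      rw [integral_sub (intQ k hk) hXQ,
        (hXindep k).integral_fun_mul_eq_mul_integral (hmeasX k).aestronglyMeasurable
          (hmeasQ k).aestronglyMeasurable, hXmean k]
      ring
    have hQlow : (1 - p) * (γ - 1 - δ) ≤ (1 - p) * ∫ ω, Qr k ω ∂μ :=
      mul_le_mul_of_nonneg_left (hEQ k) (by linarith)
    rw [hsplit, hqx] at hmono
    linarith
  -- telescoping
  have hq1 : ∫ ω, Qr 1 ω ^ 2 ∂μ = q0 ^ 2 := by
    have : (fun ω => Qr 1 ω ^ 2) =ᵐ[μ] fun _ => q0 ^ 2 := by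
      filter_upwards [has] with ω hω; rw [hω.1]
    rw [integral_congr_ae this, integral_const]; simp
  have sumbound : ∀ n : ℕ,
      ∫ ω, Qr (n + 1) ω ^ 2 ∂μ ≤
        q0 ^ 2 + 2 * γ * (∑ i ∈ Finset.Icc 1 n, ∫ ω, Shat i ω ∂μ) + n * (2 * δ + 1 - 2 * (1 - p) * (γ - 1 - δ)) := by
    intro n
    induction n with
    | zero =>
      rw [Finset.Icc_eq_empty (by omega), Finset.sum_empty]
      norm_num [hq1]
    | succ n ih =>
      have hd := drift (n + 1) (by omega)
      rw [Finset.sum_Icc_succ_top (by omega : 1 ≤ n + 1)]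
      push_cast
      linarith
  have hnn : ∀ n : ℕ, 0 ≤ ∫ ω, Qr n ω ^ 2 ∂μ :=
    fun n => integral_nonneg fun ω => sq_nonneg _
  have key : ∀ n : ℕ,
      -q0 ^ 2 - n * (2 * δ + 1 - 2 * (1 - p) * (γ - 1 - δ)) ≤ 2 * γ * ∑ i ∈ Finset.Icc 1 n, ∫ ω, Shat i ω ∂μ := by
    intro n; linarith [sumbound n, hnn (n + 1)]
  -- expectation of the average
  have hA : ∀ n : ℕ,
      (∫ ω, (1 / (n : ℝ)) * ∑ i ∈ Finset.Icc 1 n, Shat i ω ∂μ) =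
        (1 / (n : ℝ)) * ∑ i ∈ Finset.Icc 1 n, ∫ ω, Shat i ω ∂μ := by
    intro n
    rw [integral_const_mul, integral_finset_sum _ fun i _ => intS i]
  have hlow : ∀ n : ℕ, 1 ≤ n →
      ((1 - p) - (1 / 2 + δ + (1 + δ) * (1 - p)) / γ) - q0 ^ 2 / (2 * γ) * (1 / (n : ℝ)) ≤
        (1 / (n : ℝ)) * ∑ i ∈ Finset.Icc 1 n, ∫ ω, Shat i ω ∂μ := by
    intro n hn
    have hn' : (0 : ℝ) < n := by exact_mod_cast hn
    have h2γ : (0 : ℝ) < 2 * γ := by linarith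
    have hsum : (-q0 ^ 2 - (n : ℝ) * (2 * δ + 1 - 2 * (1 - p) * (γ - 1 - δ))) / (2 * γ) ≤
        ∑ i ∈ Finset.Icc 1 n, ∫ ω, Shat i ω ∂μ := by
      rw [div_le_iff₀ h2γ]; linarith [key n]
    calc ((1 - p) - (1 / 2 + δ + (1 + δ) * (1 - p)) / γ) - q0 ^ 2 / (2 * γ) * (1 / (n : ℝ))
        = (1 / (n : ℝ)) * ((-q0 ^ 2 - (n : ℝ) * (2 * δ + 1 - 2 * (1 - p) * (γ - 1 - δ)))
            / (2 * γ)) := by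
          rw [hCB]; field_simp; ring
      _ ≤ (1 / (n : ℝ)) * ∑ i ∈ Finset.Icc 1 n, ∫ ω, Shat i ω ∂μ :=
          mul_le_mul_of_nonneg_left hsum (by positivity)
  -- upper bound 1 on the averages (for coboundedness)
  have hs01 : ∀ i : ℕ, ∫ ω, Shat i ω ∂μ ≤ 1 := by
    intro i
    calc ∫ ω, Shat i ω ∂μ ≤ ∫ _, (1 : ℝ) ∂μ :=
          integral_mono (intS i) (integrable_const 1) fun ω => (hSv i ω).2
      _ = 1 := by simp
  have ha1 : ∀ n : ℕ, (∫ ω, (1 / (n : ℝ)) * ∑ i ∈ Finset.Icc 1 n, Shat i ω ∂μ) ≤ 1 := by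
    intro n
    rw [hA n]
    rcases Nat.eq_zero_or_pos n with h | h
    · subst h; simp
    · have hn' : (0 : ℝ) < n := by exact_mod_cast h
      have hsum : ∑ i ∈ Finset.Icc 1 n, ∫ ω, Shat i ω ∂μ ≤ (n : ℝ) := by
        calc ∑ i ∈ Finset.Icc 1 n, ∫ ω, Shat i ω ∂μ
            ≤ ∑ _i ∈ Finset.Icc 1 n, (1 : ℝ) := Finset.sum_le_sum fun i _ => hs01 i
          _ = (n : ℝ) := by simp [Nat.card_Icc]
      calc (1 / (n : ℝ)) * ∑ i ∈ Finset.Icc 1 n, ∫ ω, Shat i ω ∂μ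
          ≤ (1 / (n : ℝ)) * (n : ℝ) := mul_le_mul_of_nonneg_left hsum (by positivity)
        _ = 1 := by field_simp
  -- the three ingredients for the liminf comparison
  have hbnd : Filter.IsBoundedUnder (· ≥ ·) Filter.atTop (fun n : ℕ =>
      ((1 - p) - (1 / 2 + δ + (1 + δ) * (1 - p)) / γ) - q0 ^ 2 / (2 * γ) * (1 / (n : ℝ))) := by
    refine isBoundedUnder_of ⟨((1 - p) - (1 / 2 + δ + (1 + δ) * (1 - p)) / γ)
      - q0 ^ 2 / (2 * γ), fun n => ?_⟩
    have h2 : 1 / (n : ℝ) ≤ 1 := by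
      rcases Nat.eq_zero_or_pos n with h | h
      · subst h; norm_num
      · have hpos : (0 : ℝ) < n := by exact_mod_cast h
        have hn' : (1 : ℝ) ≤ n := by exact_mod_cast h
        rw [div_le_one hpos]; exact hn'
    have h3 : (0 : ℝ) ≤ q0 ^ 2 / (2 * γ) :=
      div_nonneg (sq_nonneg q0) (by linarith)
    have h4 := mul_le_mul_of_nonneg_left h2 h3
    rw [mul_one] at h4
    exact sub_le_sub_left h4 _
  have hcb : Filter.IsCoboundedUnder (· ≥ ·) Filter.atTop
      (fun k : ℕ => ∫ ω, (1 / (k : ℝ)) * ∑ i ∈ Finset.Icc 1 k, Shat i ω ∂μ) :=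
    IsBoundedUnder.isCoboundedUnder_ge (isBoundedUnder_of ⟨1, fun n => ha1 n⟩)
  have hcmp : ∀ᶠ (n : ℕ) in Filter.atTop,
      ((1 - p) - (1 / 2 + δ + (1 + δ) * (1 - p)) / γ) - q0 ^ 2 / (2 * γ) * (1 / (n : ℝ)) ≤
        ∫ ω, (1 / (n : ℝ)) * ∑ i ∈ Finset.Icc 1 n, Shat i ω ∂μ := by
    filter_upwards [eventually_ge_atTop 1] with n hn
    rw [hA n]
    exact hlow n hn
  -- the lower-bound sequence tends to the claimed constant
  have hLtend : Tendsto (fun n : ℕ =>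
        ((1 - p) - (1 / 2 + δ + (1 + δ) * (1 - p)) / γ) - q0 ^ 2 / (2 * γ) * (1 / (n : ℝ)))
      atTop (nhds ((1 - p) - (1 / 2 + δ + (1 + δ) * (1 - p)) / γ)) := by
    have h0 := tendsto_one_div_atTop_nhds_zero_nat (𝕜 := ℝ)
    have := tendsto_const_nhds (x := (1 - p) - (1 / 2 + δ + (1 + δ) * (1 - p)) / γ)
      (f := atTop (α := ℕ)) |>.sub (h0.const_mul (q0 ^ 2 / (2 * γ)))
    rw [mul_zero, sub_zero] at this
    exact this
  calc (1 - p) - (1 / 2 + δ + (1 + δ) * (1 - p)) / γ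
      = liminf (fun n : ℕ =>
          ((1 - p) - (1 / 2 + δ + (1 + δ) * (1 - p)) / γ) - q0 ^ 2 / (2 * γ) * (1 / (n : ℝ)))
        atTop := hLtend.liminf_eq.symm
    _ ≤ _ := Filter.liminf_le_liminf hcmp hbnd hcb
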